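/- Let n ≥ 2 and let V be a nonzero finite-dimensional complex vector space carrying an irreducible representation ρ of the symmetric group S_n. If the restriction of ρ to the subgroup S_{n-2} (permutations fixing the last two points) is irreducible, then for every k with k ≤ n the restriction of ρ to the subgroup S_k (permutations fixing the points k+1,…,n) is irreducible. -/

import Mathlib

/-- The subgroup of `Equiv.Perm (Fin n)` consisting of permutations fixing every
point with (0-based) index `≥ k`, i.e. the copy of `S_k` inside `S_n`. -/
def permFixFrom (n k : ℕ) : Subgroup (Equiv.Perm (Fin n)) where
  carrier := {σ | ∀ i : Fin n, k ≤ (i : ℕ) → σ i = i}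
  one_mem' := fun _ _ => rfl
  mul_mem' := by
    intro a b ha hb i hi
    have hb' := hb i hi
    have ha' := ha i hi
    simp only [Set.mem_setOf_eq] at *
    rw [Equiv.Perm.mul_apply, hb', ha']
  inv_mem' := by
    intro a ha i hi
    have h := ha i hi
    exact a.injective (by rw [show a (a⁻¹ i) = i from a.apply_symm_apply i, h])

/-- A representation `ρ : G →* (V →ₗ[ℂ] V)` is irreducible if `V` is nonzero and the only
`G`-invariant subspaces are `⊥` and `⊤`. -/
def IsIrreducibleRep {G V : Type*} [Group G] [AddCommGroup V] [Module ℂ V]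
    (ρ : G →* (V →ₗ[ℂ] V)) : Prop :=
  Nontrivial V ∧ ∀ p : Submodule ℂ V, (∀ g : G, ∀ v ∈ p, ρ g v ∈ p) → p = ⊥ ∨ p = ⊤

/-- If an irreducible representation of `S_n` (`n ≥ 2`) on a nonzero finite-dimensional
complex vector space restricts irreducibly to `S_{n-2}`, then its restriction to `S_k`
is irreducible for every `k ≤ n`. -/
theorem stmt_2 (n : ℕ) (hn : 2 ≤ n) (V : Type*) [AddCommGroup V] [Module ℂ V]
    [FiniteDimensional ℂ V] (ρ : Equiv.Perm (Fin n) →* (V →ₗ[ℂ] V))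
    (hρ : IsIrreducibleRep ρ)
    (hres : IsIrreducibleRep (ρ.comp (permFixFrom n (n - 2)).subtype)) :
    ∀ k ≤ n, IsIrreducibleRep (ρ.comp (permFixFrom n k).subtype) := by
  -- Setup: the last two points.
  classical
  have := hρ.1
  set a : Fin n := ⟨n - 2, by omega⟩ with ha
  set b : Fin n := ⟨n - 1, by omega⟩ with hb
  have hab : a ≠ b := by
    simp only [ha, hb, Fin.ne_iff_vne]
    omega
  set τ : Equiv.Perm (Fin n) := Equiv.swap a b with hτ
  -- ρ τ commutes with everything in S_{n-2}.
  have hcomm : ∀ σ ∈ permFixFrom n (n - 2), ρ σ * ρ τ = ρ τ * ρ σ := by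
    intro σ hσ
    have hσa : σ a = a := hσ a (le_refl _)
    have hσb : σ b = b := hσ b (by simp [hb]; omega)
    have : σ * τ * σ⁻¹ = τ := by
      rw [hτ, ← Equiv.swap_apply_apply, hσa, hσb]
    calc ρ σ * ρ τ = ρ (σ * τ) := (map_mul ρ σ τ).symm
      _ = ρ ((σ * τ * σ⁻¹) * σ) := by group
      _ = ρ (τ * σ) := by rw [this]
      _ = ρ τ * ρ σ := map_mul ρ τ σ
  -- ρ τ has an eigenvalue c, and its eigenspace is S_{n-2}-invariant, hence all of V.
  obtain ⟨c, hc⟩ := Module.End.exists_eigenvalue (ρ τ)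
  set E : Submodule ℂ V := Module.End.eigenspace (ρ τ) c with hE
  have hEinv : ∀ g : (permFixFrom n (n - 2)), ∀ v ∈ E,
      (ρ.comp (permFixFrom n (n - 2)).subtype) g v ∈ E := by
    rintro ⟨σ, hσ⟩ v hv
    have hv' : ρ τ v = c • v := Module.End.mem_eigenspace_iff.mp hv
    have : ρ τ (ρ σ v) = c • (ρ σ v) := by
      have h := congrArg (fun f : V →ₗ[ℂ] V => f v) (hcomm σ hσ)
      simp only [Module.End.mul_apply] at h
      rw [← h, hv', map_smul]
    exact Module.End.mem_eigenspace_iff.mpr this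
  have hEne : E ≠ ⊥ := hc
  have hEtop : E = ⊤ := by
    rcases hres.2 E hEinv with h | h
    · exact absurd h hEne
    · exact h
  have hτscal : ∀ v : V, ρ τ v = c • v := by
    intro v
    have : v ∈ E := hEtop ▸ Submodule.mem_top
    exact Module.End.mem_eigenspace_iff.mp this
  -- every swap acts as c • id
  have hswap : ∀ x y : Fin n, x ≠ y → ∀ v : V, ρ (Equiv.swap x y) v = c • v := by
    intro x y hxy v
    obtain ⟨σ, hσ⟩ := isConj_iff.mp (Equiv.Perm.isConj_swap hab hxy)
    have : Equiv.swap x y = σ * τ * σ⁻¹ := hσ.symm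
    rw [this, map_mul, map_mul]
    simp only [Module.End.mul_apply]
    rw [hτscal (ρ σ⁻¹ v), map_smul]
    congr 1
    have : ρ σ (ρ σ⁻¹ v) = ρ (σ * σ⁻¹) v := by rw [map_mul]; rfl
    rw [this]; simp
  -- every g acts as a scalar
  have hscal : ∀ g : Equiv.Perm (Fin n), ∃ d : ℂ, ∀ v : V, ρ g v = d • v := by
    intro g
    refine Equiv.Perm.swap_induction_on g ⟨1, fun v => by simp⟩ ?_
    intro f x y hxy ih
    obtain ⟨d, hd⟩ := ih
    exact ⟨c * d, fun v => by
      rw [map_mul, Module.End.mul_apply, hd, map_smul, hswap x y hxy, smul_smul, mul_comm d c]⟩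
  -- conclude
  intro k _
  refine ⟨hρ.1, fun p _ => hρ.2 p ?_⟩
  intro g v hv
  obtain ⟨d, hd⟩ := hscal g
  rw [hd]
  exact Submodule.smul_mem p d hv
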